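/- Let h ∈ (0,∞), let N ∈ ℕ with N ≥ 1, set T = N·h, and let λ ∈ (0,∞) and μ ∈ ℝ. Then μ² · ∫_0^T ( e^{-2λs} - e^{-2λ·⌈s⌉_h} ) ds ≥ μ² · (1 - e^{-2λT}) · h / (4 · e^{λh}) ≥ 0. (This is the variance gap Var⟨b,X⟩ − Var⟨b,Y₁⟩ between the exact stochastic convolution and its exponential-Euler approximation in the b-th eigendirection, expressed deterministically via Itô's isometry.) -/

import Mathlib

open MeasureTheory

private lemma exp_integral_aux (lam a b : ℝ) (hlam : 0 < lam) :
    ∫ s in a..b, Real.exp (-2 * lam * s)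
      = (Real.exp (-2 * lam * a) - Real.exp (-2 * lam * b)) / (2 * lam) := by
  have hc : (-2 * lam) ≠ 0 := by positivity
  rw [intervalIntegral.integral_comp_mul_left (f := Real.exp) hc, integral_exp]
  field_simp
  have e : ∀ x : ℝ, lam * x * lam⁻¹ = x := fun x => by rw [mul_comm lam x, mul_inv_cancel_right₀ hlam.ne']
  ring_nf
  simp only [e]

private lemma step_aux (lam h a : ℝ) (hlam : 0 < lam) (hh : 0 < h) :
    (Real.exp (-2 * lam * a) - Real.exp (-2 * lam * (a + h))) / (2 * lam)
        - h * Real.exp (-2 * lam * (a + h))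
      ≥ (Real.exp (-2 * lam * a) - Real.exp (-2 * lam * (a + h)))
          * (h / (4 * Real.exp (lam * h))) := by
  have hE : 0 < Real.exp (-2 * lam * a) := Real.exp_pos _
  have hsplit : Real.exp (-2 * lam * (a + h))
      = Real.exp (-2 * lam * a) / Real.exp (lam * h) ^ 2 := by
    rw [sq, ← Real.exp_add, ← Real.exp_sub]; ring_nf
  rw [hsplit]
  set E := Real.exp (-2 * lam * a) with hEdef
  set F := Real.exp (lam * h) with hFdef
  have hF : 0 < F := Real.exp_pos _
  have hle : 1 + lam * h ≤ F := by
    rw [hFdef]; have := Real.add_one_le_exp (lam * h); linarith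
  have hx : 0 < lam * h := by positivity
  have key : 4 * (lam * h) * F + (lam * h) * (F ^ 2 - 1) ≤ 2 * F * (F ^ 2 - 1) := by
    nlinarith [mul_nonneg (mul_nonneg hx.le hF.le) (sub_nonneg.2 hle),
      mul_nonneg (mul_nonneg hx.le (mul_nonneg hF.le hF.le)) (sub_nonneg.2 hle),
      mul_nonneg hx.le (sq_nonneg (F - 1)), sq_nonneg (F - 1 - lam * h),
      mul_pos hx (mul_pos hx hx)]
  rw [ge_iff_le, ← sub_nonneg]
  have hrw : (E - E / F ^ 2) / (2 * lam) - h * (E / F ^ 2)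
      - (E - E / F ^ 2) * (h / (4 * F))
      = E * (2 * F * (F ^ 2 - 1) - (4 * (lam * h) * F + (lam * h) * (F ^ 2 - 1)))
          / (4 * lam * F ^ 3) := by
    field_simp
    ring
  rw [hrw]
  apply div_nonneg (mul_nonneg hE.le (by linarith)) (by positivity)

private lemma gint_aux (lam h : ℝ) (hlam : 0 < lam) (hh : 0 < h) (a b : ℝ) :
    IntervalIntegrable
      (fun s => Real.exp (-2 * lam * (h * (⌈s / h⌉ : ℝ)))) volume a b := by
  apply Antitone.intervalIntegrable
  intro s t hst
  have h1 : (⌈s / h⌉ : ℝ) ≤ (⌈t / h⌉ : ℝ) := by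
    exact_mod_cast Int.ceil_mono (by gcongr)
  have h2 : h * (⌈s / h⌉ : ℝ) ≤ h * (⌈t / h⌉ : ℝ) := by nlinarith
  have h3 := mul_le_mul_of_nonneg_left h2 (by positivity : (0:ℝ) ≤ 2 * lam)
  exact Real.exp_le_exp.2 (by linarith)

private lemma intble_aux (lam h : ℝ) (hlam : 0 < lam) (hh : 0 < h) (a b : ℝ) :
    IntervalIntegrable
      (fun s => Real.exp (-2 * lam * s) - Real.exp (-2 * lam * (h * (⌈s / h⌉ : ℝ))))
      volume a b :=
  ((by fun_prop : Continuous fun s : ℝ => Real.exp (-2 * lam * s)).intervalIntegrable a b).sub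
    (gint_aux lam h hlam hh a b)

private lemma main_aux (h lam : ℝ) (hh : 0 < h) (hlam : 0 < lam) (n : ℕ) :
    ∫ s in (0:ℝ)..((n : ℝ) * h),
        (Real.exp (-2 * lam * s) - Real.exp (-2 * lam * (h * (⌈s / h⌉ : ℝ))))
      ≥ (1 - Real.exp (-2 * lam * ((n : ℝ) * h))) * (h / (4 * Real.exp (lam * h))) := by
  induction n with
  | zero => simp
  | succ n ih =>
    have hcast : ((n + 1 : ℕ) : ℝ) = (n : ℝ) + 1 := by push_cast; ring
    rw [hcast]
    have hlt : (n : ℝ) * h < ((n : ℝ) + 1) * h := by nlinarith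
    have hsplit : ∫ s in (0:ℝ)..(((n : ℝ) + 1) * h),
          (Real.exp (-2 * lam * s) - Real.exp (-2 * lam * (h * (⌈s / h⌉ : ℝ))))
        = (∫ s in (0:ℝ)..((n : ℝ) * h),
            (Real.exp (-2 * lam * s) - Real.exp (-2 * lam * (h * (⌈s / h⌉ : ℝ)))))
          + ∫ s in ((n : ℝ) * h)..(((n : ℝ) + 1) * h),
            (Real.exp (-2 * lam * s) - Real.exp (-2 * lam * (h * (⌈s / h⌉ : ℝ)))) :=
      (intervalIntegral.integral_add_adjacent_intervals
        (intble_aux lam h hlam hh _ _) (intble_aux lam h hlam hh _ _)).symm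
    have hgconst : ∫ s in ((n : ℝ) * h)..(((n : ℝ) + 1) * h),
          Real.exp (-2 * lam * (h * (⌈s / h⌉ : ℝ)))
        = h * Real.exp (-2 * lam * (((n : ℝ) + 1) * h)) := by
      rw [intervalIntegral.integral_congr_ae
        (g := fun _ => Real.exp (-2 * lam * (((n : ℝ) + 1) * h)))
        (Filter.Eventually.of_forall fun s hs => ?_)]
      · rw [intervalIntegral.integral_const, smul_eq_mul]; ring
      · rw [Set.uIoc_of_le hlt.le] at hs
        obtain ⟨hs1, hs2⟩ := hs
        have hceil : (⌈s / h⌉ : ℤ) = (n : ℤ) + 1 := by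
          rw [Int.ceil_eq_iff]
          constructor
          · push_cast
            rw [lt_div_iff₀ hh]
            nlinarith
          · push_cast
            rw [div_le_iff₀ hh]
            nlinarith
        rw [hceil]
        push_cast
        ring_nf
    have hfint : ∫ s in ((n : ℝ) * h)..(((n : ℝ) + 1) * h),
          (Real.exp (-2 * lam * s) - Real.exp (-2 * lam * (h * (⌈s / h⌉ : ℝ))))
        = (Real.exp (-2 * lam * ((n : ℝ) * h))
            - Real.exp (-2 * lam * (((n : ℝ) + 1) * h))) / (2 * lam)
          - h * Real.exp (-2 * lam * (((n : ℝ) + 1) * h)) := by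
      rw [intervalIntegral.integral_sub
        ((by fun_prop : Continuous fun s : ℝ => Real.exp (-2 * lam * s)).intervalIntegrable _ _)
        (gint_aux lam h hlam hh _ _), hgconst, exp_integral_aux lam _ _ hlam]
    have hstep := step_aux lam h ((n : ℝ) * h) hlam hh
    have hab : (n : ℝ) * h + h = ((n : ℝ) + 1) * h := by ring
    rw [hab] at hstep
    have hring : (1 - Real.exp (-2 * lam * ((n : ℝ) * h)))
          * (h / (4 * Real.exp (lam * h)))
        + (Real.exp (-2 * lam * ((n : ℝ) * h))
            - Real.exp (-2 * lam * (((n : ℝ) + 1) * h)))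
          * (h / (4 * Real.exp (lam * h)))
        = (1 - Real.exp (-2 * lam * (((n : ℝ) + 1) * h)))
          * (h / (4 * Real.exp (lam * h))) := by ring
    rw [hsplit, hfint]
    linarith

theorem stmt_0 (h : ℝ) (hh : 0 < h) (N : ℕ) (hN : 1 ≤ N) (T : ℝ) (hT : T = N * h)
    (lam μ : ℝ) (hlam : 0 < lam) :
    μ ^ 2 * ∫ s in (0:ℝ)..T,
        (Real.exp (-2 * lam * s) - Real.exp (-2 * lam * (h * (⌈s / h⌉ : ℝ))))
      ≥ μ ^ 2 * (1 - Real.exp (-2 * lam * T)) * h / (4 * Real.exp (lam * h)) ∧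
    μ ^ 2 * (1 - Real.exp (-2 * lam * T)) * h / (4 * Real.exp (lam * h)) ≥ 0 := by
  subst hT
  have hexp : Real.exp (-2 * lam * ((N : ℝ) * h)) ≤ 1 := by
    rw [Real.exp_le_one_iff]
    have : (0:ℝ) ≤ (N : ℝ) * h := by positivity
    nlinarith
  constructor
  · have hm := main_aux h lam hh hlam N
    have h2 : μ ^ 2 * ((1 - Real.exp (-2 * lam * ((N : ℝ) * h)))
          * (h / (4 * Real.exp (lam * h))))
        ≤ μ ^ 2 * ∫ s in (0:ℝ)..((N : ℝ) * h),
            (Real.exp (-2 * lam * s) - Real.exp (-2 * lam * (h * (⌈s / h⌉ : ℝ)))) :=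
      mul_le_mul_of_nonneg_left hm (sq_nonneg μ)
    have h3 : μ ^ 2 * (1 - Real.exp (-2 * lam * ((N : ℝ) * h))) * h
          / (4 * Real.exp (lam * h))
        = μ ^ 2 * ((1 - Real.exp (-2 * lam * ((N : ℝ) * h)))
          * (h / (4 * Real.exp (lam * h)))) := by
      ring
    rw [ge_iff_le, h3]
    exact h2
  · apply div_nonneg _ (by positivity)
    apply mul_nonneg _ hh.le
    exact mul_nonneg (sq_nonneg μ) (by linarith)
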